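/- Let H be a complete real inner product space, X ⊆ H a nonempty closed convex set with orthogonal projection P_X, and L : H × ℝ^M → ℝ a function such that for each fixed λ the map x ↦ L(x, λ) is convex and differentiable, and for each fixed x the map λ ↦ L(x, λ) is concave and differentiable. Let (u, μ) ∈ H × ℝ^M, ε > 0, and define the saddle point updates u' = P_X(u − ε ∇_x L(u, μ)) and μ' = [μ + ε ∇_λ L(u, μ)]₊, where [v]₊ denotes the componentwise positive part of v ∈ ℝ^M. Then for every x ∈ X and every λ ∈ ℝ^M with λ ≥ 0 componentwise: L(u, λ) − L(x, μ) ≤ (1/(2ε)) ( ‖u − x‖² − ‖u' − x‖² + ‖μ − λ‖² − ‖μ' − λ‖² ) + (ε/2) ( ‖∇_x L(u, μ)‖² + ‖∇_λ L(u, μ)‖² ). -/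

import Mathlib

/-- Componentwise positive part of a vector in `ℝ^M` (the orthogonal projection
onto the nonnegative orthant). -/
noncomputable def posPart5 {M : ℕ} (v : EuclideanSpace ℝ (Fin M)) :
    EuclideanSpace ℝ (Fin M) :=
  WithLp.toLp 2 (fun i => max (v i) 0)

open InnerProductSpace

/-- First-order condition for convex differentiable functions. -/
lemma convex_grad_ineq5 {H : Type*} [NormedAddCommGroup H] [InnerProductSpace ℝ H]
    [CompleteSpace H]
    (f : H → ℝ) (hf : ConvexOn ℝ Set.univ f) (hd : Differentiable ℝ f) (u x : H) :
    f u + ⟪gradient f u, x - u⟫_ℝ ≤ f x := by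
  set φ : ℝ → ℝ := fun t => f (u + t • (x - u)) with hφdef
  have hg : HasDerivAt (fun t : ℝ => u + t • (x - u)) (x - u) 0 := by
    simpa using ((hasDerivAt_id (0:ℝ)).smul_const (x - u)).const_add u
  have hfd : HasFDerivAt f (toDual ℝ H (gradient f u)) u := (hd u).hasGradientAt
  have hfd' : HasFDerivAt f (toDual ℝ H (gradient f u))
      ((fun t : ℝ => u + t • (x - u)) 0) := by simpa using hfd
  have hφd : HasDerivAt φ ⟪gradient f u, x - u⟫_ℝ 0 := by
    have := hfd'.comp_hasDerivAt 0 hg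
    rw [toDual_apply_apply] at this
    exact this
  have hφconv : ConvexOn ℝ Set.univ φ := by
    have := hf.comp_affineMap (AffineMap.lineMap u x : ℝ →ᵃ[ℝ] H)
    simp only [Set.preimage_univ] at this
    suffices heq : φ = f ∘ ⇑(AffineMap.lineMap u x : ℝ →ᵃ[ℝ] H) by rw [heq]; exact this
    funext t
    simp [hφdef, AffineMap.lineMap_apply, add_comm]
  have hs := hφconv.le_slope_of_hasDerivAt (Set.mem_univ (0:ℝ)) (Set.mem_univ 1) one_pos hφd
  have hsl : slope φ 0 1 = f x - f u := by
    simp [slope_def_field, hφdef]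
  rw [hsl] at hs
  linarith

/-- Metric projection onto a closed convex set is "firmly" contracting toward points of the set. -/
lemma proj_sq_le5 {H : Type*} [NormedAddCommGroup H] [InnerProductSpace ℝ H]
    (X : Set H) (hXconv : Convex ℝ X)
    (P : H → H) (hP : ∀ y : H, P y ∈ X ∧ ∀ w ∈ X, ‖y - P y‖ ≤ ‖y - w‖)
    (y : H) (x : H) (hx : x ∈ X) : ‖P y - x‖ ^ 2 ≤ ‖y - x‖ ^ 2 := by
  have hne : Nonempty X := ⟨⟨P y, (hP y).1⟩⟩
  have hinf : ‖y - P y‖ = ⨅ w : X, ‖y - w‖ := by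
    apply le_antisymm
    · exact le_ciInf fun w => (hP y).2 w w.2
    · exact ciInf_le ⟨0, fun _ ⟨w, hw⟩ => hw ▸ norm_nonneg _⟩ (⟨P y, (hP y).1⟩ : X)
  have hvar : ⟪y - P y, x - P y⟫_ℝ ≤ 0 :=
    ((norm_eq_iInf_iff_real_inner_le_zero hXconv (hP y).1).1 hinf) x hx
  have hdecomp : ‖y - x‖ ^ 2 = ‖y - P y‖ ^ 2 + 2 * ⟪y - P y, P y - x⟫_ℝ + ‖P y - x‖ ^ 2 := by
    have : y - x = (y - P y) + (P y - x) := by abel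
    rw [this, norm_add_sq_real]
  have h2 : ⟪y - P y, P y - x⟫_ℝ = -⟪y - P y, x - P y⟫_ℝ := by
    rw [← inner_neg_right]; congr 1; abel
  nlinarith [sq_nonneg ‖y - P y‖]

lemma posPart_sq_le5 {M : ℕ} (v lam : EuclideanSpace ℝ (Fin M)) (hlam : ∀ i, 0 ≤ lam i) :
    ‖posPart5 v - lam‖ ^ 2 ≤ ‖v - lam‖ ^ 2 := by
  rw [EuclideanSpace.norm_eq, EuclideanSpace.norm_eq,
    Real.sq_sqrt (by positivity), Real.sq_sqrt (by positivity)]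
  apply Finset.sum_le_sum
  intro i _
  have : (posPart5 v - lam) i = max (v i) 0 - lam i := by simp [posPart5]
  rw [this]
  have : (v - lam) i = v i - lam i := by simp
  rw [this]
  rcases le_or_gt 0 (v i) with h | h
  · rw [max_eq_left h]
  · rw [max_eq_right h.le]
    have := hlam i
    rw [Real.norm_eq_abs, Real.norm_eq_abs, sq_abs, sq_abs]
    nlinarith

/-- Lemma 2 of the paper: the per-iteration decrement property of one step of the
Arrow–Hurwicz saddle point method applied to a convex-concave function `L`, with a
projected primal gradient descent step and a projected dual gradient ascent step. -/
theorem stmt5 {H : Type*} [NormedAddCommGroup H] [InnerProductSpace ℝ H]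
    [CompleteSpace H] {M : ℕ}
    (X : Set H) (hXne : X.Nonempty) (hXcl : IsClosed X) (hXconv : Convex ℝ X)
    (P : H → H) (hP : ∀ y : H, P y ∈ X ∧ ∀ w ∈ X, ‖y - P y‖ ≤ ‖y - w‖)
    (L : H × EuclideanSpace ℝ (Fin M) → ℝ)
    (hLconv : ∀ lam, ConvexOn ℝ Set.univ (fun x => L (x, lam)))
    (hLxdiff : ∀ lam, Differentiable ℝ (fun x => L (x, lam)))
    (hLconc : ∀ x, ConcaveOn ℝ Set.univ (fun lam => L (x, lam)))
    (hLlamdiff : ∀ x, Differentiable ℝ (fun lam => L (x, lam)))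
    (u : H) (μ : EuclideanSpace ℝ (Fin M)) (ε : ℝ) (hε : 0 < ε)
    (u' : H) (hu' : u' = P (u - ε • gradient (fun x => L (x, μ)) u))
    (μ' : EuclideanSpace ℝ (Fin M))
    (hμ' : μ' = posPart5 (μ + ε • gradient (fun lam => L (u, lam)) μ)) :
    ∀ x ∈ X, ∀ lam : EuclideanSpace ℝ (Fin M), (∀ i, 0 ≤ lam i) →
      L (u, lam) - L (x, μ) ≤
        (1 / (2 * ε)) * (‖u - x‖ ^ 2 - ‖u' - x‖ ^ 2
            + ‖μ - lam‖ ^ 2 - ‖μ' - lam‖ ^ 2)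
          + (ε / 2) * (‖gradient (fun x => L (x, μ)) u‖ ^ 2
            + ‖gradient (fun lam => L (u, lam)) μ‖ ^ 2) := by
  intro x hx lam hlam
  set g := gradient (fun x => L (x, μ)) u with hg
  set h := gradient (fun lam => L (u, lam)) μ with hh
  -- convexity inequality in x
  have hconv : L (u, μ) + ⟪g, x - u⟫_ℝ ≤ L (x, μ) :=
    convex_grad_ineq5 _ (hLconv μ) (hLxdiff μ) u x
  -- concavity inequality in lam: apply convex lemma to the negation
  have hconc : L (u, lam) - L (u, μ) ≤ ⟪h, lam - μ⟫_ℝ := by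
    have hneg : ConvexOn ℝ Set.univ (fun l => -L (u, l)) := (hLconc u).neg
    have hdneg : Differentiable ℝ (fun l => -L (u, l)) := (hLlamdiff u).neg
    have hgradneg : gradient (fun l => -L (u, l)) μ = -h := by
      apply HasGradientAt.gradient
      have h1 : HasGradientAt (fun l => L (u, l)) h μ := by
        rw [hh]; exact ((hLlamdiff u) μ).hasGradientAt
      have h2 : HasFDerivAt (fun l => -L (u, l))
          (-(InnerProductSpace.toDual ℝ _ h)) μ := h1.hasFDerivAt.neg
      rw [hasGradientAt_iff_hasFDerivAt, map_neg]
      exact h2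
    have := convex_grad_ineq5 _ hneg hdneg μ lam
    rw [hgradneg, inner_neg_left] at this
    linarith
  -- projection inequalities
  have hproj : ‖u' - x‖ ^ 2 ≤ ‖(u - ε • g) - x‖ ^ 2 := by
    rw [hu']; exact proj_sq_le5 X hXconv P hP _ x hx
  have hpos : ‖μ' - lam‖ ^ 2 ≤ ‖(μ + ε • h) - lam‖ ^ 2 := by
    rw [hμ']; exact posPart_sq_le5 _ lam hlam
  -- expand squares
  have hexp1 : ‖(u - ε • g) - x‖ ^ 2
      = ‖u - x‖ ^ 2 - 2 * ε * ⟪g, u - x⟫_ℝ + ε ^ 2 * ‖g‖ ^ 2 := by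
    have : (u - ε • g) - x = (u - x) - ε • g := by abel
    rw [this, norm_sub_sq_real, real_inner_smul_right, norm_smul,
      real_inner_comm]
    simp [abs_of_pos hε, mul_pow]
    ring
  have hexp2 : ‖(μ + ε • h) - lam‖ ^ 2
      = ‖μ - lam‖ ^ 2 + 2 * ε * ⟪h, μ - lam⟫_ℝ + ε ^ 2 * ‖h‖ ^ 2 := by
    have : (μ + ε • h) - lam = (μ - lam) + ε • h := by abel
    rw [this, norm_add_sq_real, real_inner_smul_right, norm_smul,
      real_inner_comm]
    simp [abs_of_pos hε, mul_pow]
    ring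
  have hinner1 : ⟪g, u - x⟫_ℝ = -⟪g, x - u⟫_ℝ := by
    rw [← inner_neg_right]; congr 1; abel
  have hinner2 : ⟪h, lam - μ⟫_ℝ = -⟪h, μ - lam⟫_ℝ := by
    rw [← inner_neg_right]; congr 1; abel
  have h2ε : (0:ℝ) < 2 * ε := by linarith
  rw [show (1 / (2 * ε)) * (‖u - x‖ ^ 2 - ‖u' - x‖ ^ 2 + ‖μ - lam‖ ^ 2 - ‖μ' - lam‖ ^ 2)
        + (ε / 2) * (‖g‖ ^ 2 + ‖h‖ ^ 2)
      = ((‖u - x‖ ^ 2 - ‖u' - x‖ ^ 2 + ‖μ - lam‖ ^ 2 - ‖μ' - lam‖ ^ 2)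
        + ε ^ 2 * (‖g‖ ^ 2 + ‖h‖ ^ 2)) / (2 * ε) by field_simp,
    le_div_iff₀ h2ε]
  nlinarith [hconv, hconc, hproj, hpos, hexp1, hexp2]
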